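/- Let S be a t-free set of size m in Z_n, and let Σ S denote the set of all sums of k elements of S for 1 ≤ k ≤ ⌊t/2⌋. Then all such sums arising from distinct multisets are distinct and non-zero in Z_n, so |Σ S| = C(m + ⌊t/2⌋, ⌊t/2⌋) − 1 and hence n − 1 ≥ C(m + ⌊t/2⌋, ⌊t/2⌋) − 1. -/

import Mathlib

/-- `S` is a `t`-free set in the additive abelian group `G`: whenever a sum of `k`
elements of `S` equals a sum of `l` elements of `S` with `k + l ≤ t`, the two
multisets of terms coincide (in particular `k = l`). -/
def IsTFreeSet {G : Type*} [AddCommGroup G] (t : ℕ) (S : Set G) : Prop :=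
  ∀ A B : Multiset G, (∀ x ∈ A, x ∈ S) → (∀ x ∈ B, x ∈ S) →
    Multiset.card A + Multiset.card B ≤ t → A.sum = B.sum → A = B

lemma sum_multichoose_aux (m r : ℕ) :
    ∑ k ∈ Finset.range (r + 1), (m + k - 1).choose k = (m + r).choose r := by
  induction r with
  | zero => simp
  | succ r ih =>
    rw [Finset.sum_range_succ, ih]
    have h1 : m + (r + 1) - 1 = m + r := by omega
    rw [h1, show m + (r + 1) = (m + r) + 1 by omega, Nat.choose_succ_succ]

theorem t_free_sumset (t m n : ℕ) (ht : 0 < t) (hn : 0 < n)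
    (S : Finset (ZMod n)) (hS : IsTFreeSet t (↑S : Set (ZMod n))) (hcard : S.card = m) :
    (∀ A B : Multiset (ZMod n), (∀ x ∈ A, x ∈ S) → (∀ x ∈ B, x ∈ S) →
        1 ≤ Multiset.card A → Multiset.card A ≤ t / 2 →
        1 ≤ Multiset.card B → Multiset.card B ≤ t / 2 →
        A.sum = B.sum → A = B) ∧
    (∀ A : Multiset (ZMod n), (∀ x ∈ A, x ∈ S) →
        1 ≤ Multiset.card A → Multiset.card A ≤ t / 2 → A.sum ≠ 0) ∧
    Set.ncard {x : ZMod n | ∃ A : Multiset (ZMod n), (∀ a ∈ A, a ∈ S) ∧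
        1 ≤ Multiset.card A ∧ Multiset.card A ≤ t / 2 ∧ x = A.sum}
      = (m + t / 2).choose (t / 2) - 1 ∧
    (m + t / 2).choose (t / 2) - 1 ≤ n - 1 := by
  classical
  haveI : NeZero n := ⟨hn.ne'⟩
  set r := t / 2 with hr
  have part1 : ∀ A B : Multiset (ZMod n), (∀ x ∈ A, x ∈ S) → (∀ x ∈ B, x ∈ S) →
      1 ≤ Multiset.card A → Multiset.card A ≤ r →
      1 ≤ Multiset.card B → Multiset.card B ≤ r →
      A.sum = B.sum → A = B := by
    intro A B hA hB _ hA2 _ hB2 hsum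
    exact hS A B hA hB (by omega) hsum
  have part2 : ∀ A : Multiset (ZMod n), (∀ x ∈ A, x ∈ S) →
      1 ≤ Multiset.card A → Multiset.card A ≤ r → A.sum ≠ 0 := by
    intro A hA h1 h2 h0
    have := hS A 0 hA (by simp) (by simp; omega) (by simpa using h0)
    simp [this] at h1
  -- counting
  let F : ℕ → Finset (Multiset (ZMod n)) := fun k =>
    (S.sym k).map ⟨fun s : Sym (ZMod n) k => s.1, fun a b h => Subtype.ext h⟩
  have hFmem : ∀ k A, A ∈ F k ↔ (∀ a ∈ A, a ∈ S) ∧ Multiset.card A = k := by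
    intro k A
    simp only [F, Finset.mem_map, Function.Embedding.coeFn_mk]
    constructor
    · rintro ⟨s, hs, rfl⟩
      exact ⟨fun a ha => Finset.mem_sym_iff.mp hs a ha, s.2⟩
    · rintro ⟨h1, h2⟩
      exact ⟨⟨A, h2⟩, Finset.mem_sym_iff.mpr (fun a ha => h1 a ha), rfl⟩
  have hsymeq : ∀ k, S.sym k = Finset.univ.map
      ⟨Sym.map (fun x : ↥S => (x : ZMod n)), Sym.map_injective Subtype.val_injective k⟩ := by
    intro k
    ext A
    simp only [Finset.mem_sym_iff, Finset.mem_map, Finset.mem_univ, true_and,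
      Function.Embedding.coeFn_mk]
    constructor
    · intro hA
      refine ⟨Sym.map (fun x => (⟨x.1, hA x.1 x.2⟩ : ↥S)) A.attach, ?_⟩
      rw [Sym.map_map]
      exact (Sym.map_congr (fun a _ => rfl)).trans (Sym.attach_map_coe A)
    · rintro ⟨s, rfl⟩
      intro a ha
      obtain ⟨b, _, rfl⟩ := Sym.mem_map.mp ha
      exact b.2
  have hFcard : ∀ k, (F k).card = (m + k - 1).choose k := by
    intro k
    rw [Finset.card_map, hsymeq k, Finset.card_map, Finset.card_univ,
      Sym.card_sym_eq_choose, Fintype.card_coe, hcard]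
  let M : Finset (Multiset (ZMod n)) := (Finset.Icc 1 r).biUnion F
  have hMmem : ∀ A, A ∈ M ↔ (∀ a ∈ A, a ∈ S) ∧ 1 ≤ Multiset.card A ∧ Multiset.card A ≤ r := by
    intro A
    simp only [M, Finset.mem_biUnion, Finset.mem_Icc, hFmem]
    constructor
    · rintro ⟨k, ⟨hk1, hk2⟩, h1, rfl⟩; exact ⟨h1, hk1, hk2⟩
    · rintro ⟨h1, h2, h3⟩; exact ⟨_, ⟨h2, h3⟩, h1, rfl⟩
  have hMcard : M.card = (m + r).choose r - 1 := by
    have hdisj : ∀ k ∈ Finset.Icc 1 r, ∀ l ∈ Finset.Icc 1 r, k ≠ l →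
        Disjoint (F k) (F l) := by
      intro k _ l _ hkl
      rw [Finset.disjoint_left]
      intro A hAk hAl
      rw [hFmem] at hAk hAl
      exact hkl (hAk.2 ▸ hAl.2)
    rw [Finset.card_biUnion hdisj]
    have : ∑ k ∈ Finset.Icc 1 r, (F k).card
        = ∑ k ∈ Finset.Icc 1 r, (m + k - 1).choose k := by
      exact Finset.sum_congr rfl fun k _ => hFcard k
    rw [this]
    have h2 : ∑ k ∈ Finset.Icc 1 r, (m + k - 1).choose k
        = ∑ i ∈ Finset.range r, (m + (1 + i) - 1).choose (1 + i) := by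
      rw [← Finset.Ico_add_one_right_eq_Icc, Finset.sum_Ico_eq_sum_range]
      simp only [Nat.add_sub_cancel]
    have h3 := sum_multichoose_aux m r
    rw [Finset.sum_range_succ'] at h3
    have h4 : ∑ i ∈ Finset.range r, (m + (i + 1) - 1).choose (i + 1)
        = ∑ i ∈ Finset.range r, (m + (1 + i) - 1).choose (1 + i) := by
      exact Finset.sum_congr rfl fun i _ => by rw [Nat.add_comm i 1]
    simp only [Nat.add_zero, Nat.choose_zero_right] at h3
    omega
  have hinj : Set.InjOn Multiset.sum (↑M : Set (Multiset (ZMod n))) := by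
    intro A hA B hB h
    rw [Finset.mem_coe, hMmem] at hA hB
    exact part1 A B hA.1 hB.1 hA.2.1 hA.2.2 hB.2.1 hB.2.2 h
  have hIcard : (M.image Multiset.sum).card = M.card := Finset.card_image_of_injOn hinj
  have hset : {x : ZMod n | ∃ A : Multiset (ZMod n), (∀ a ∈ A, a ∈ S) ∧
      1 ≤ Multiset.card A ∧ Multiset.card A ≤ r ∧ x = A.sum}
      = ↑(M.image Multiset.sum) := by
    ext x
    simp only [Set.mem_setOf_eq, Finset.coe_image, Set.mem_image, Finset.mem_coe, hMmem]
    constructor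
    · rintro ⟨A, h1, h2, h3, rfl⟩; exact ⟨A, ⟨h1, h2, h3⟩, rfl⟩
    · rintro ⟨A, ⟨h1, h2, h3⟩, rfl⟩; exact ⟨A, h1, h2, h3, rfl⟩
  have part3 : Set.ncard {x : ZMod n | ∃ A : Multiset (ZMod n), (∀ a ∈ A, a ∈ S) ∧
      1 ≤ Multiset.card A ∧ Multiset.card A ≤ r ∧ x = A.sum}
      = (m + r).choose r - 1 := by
    rw [hset, Set.ncard_coe_finset, hIcard, hMcard]
  have hsub : M.image Multiset.sum ⊆ Finset.univ.erase (0 : ZMod n) := by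
    intro x hx
    rw [Finset.mem_image] at hx
    obtain ⟨A, hA, rfl⟩ := hx
    rw [hMmem] at hA
    exact Finset.mem_erase.mpr ⟨part2 A hA.1 hA.2.1 hA.2.2, Finset.mem_univ _⟩
  have hle := Finset.card_le_card hsub
  rw [hIcard, hMcard, Finset.card_erase_of_mem (Finset.mem_univ _), Finset.card_univ,
    ZMod.card] at hle
  exact ⟨part1, part2, part3, hle⟩
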